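/- For all b ∈ ℝ and x ∈ ℝ: ∫₀ˣ e^{−t}·erfc(b + t) dt = erfc(b) + e^{−x}·(erf(b + x) − 1) + e^{b + 1/4}·( erf(b + 1/2) − erf(b + x + 1/2) ). -/

import Mathlib

open Real

/-- The error function `erf x = (2/√π) ∫₀ˣ e^{−t²} dt`. -/
noncomputable def erf (x : ℝ) : ℝ :=
  (2 / Real.sqrt π) * ∫ t in (0 : ℝ)..x, Real.exp (-t ^ 2)

/-- The complementary error function. -/
noncomputable def erfc (x : ℝ) : ℝ := 1 - erf x

lemma hasDerivAt_erf (x : ℝ) :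
    HasDerivAt erf (2 / Real.sqrt π * Real.exp (-x ^ 2)) x := by
  have hc : Continuous fun t : ℝ => Real.exp (-t ^ 2) := by continuity
  have h := intervalIntegral.integral_hasDerivAt_right
    (hc.intervalIntegrable 0 x) (hc.stronglyMeasurableAtFilter _ _) hc.continuousAt
  have := h.const_mul (2 / Real.sqrt π)
  exact this

lemma continuous_erf : Continuous erf :=
  continuous_iff_continuousAt.2 fun x => (hasDerivAt_erf x).continuousAt

/-- Integral of `e^{−t} erfc(b + t)` from 0 to x (the modified Marketron potential,
up to the factor `1/(2ε̄)`). -/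
theorem integral_exp_mul_erfc (b x : ℝ) :
    (∫ t in (0 : ℝ)..x, Real.exp (-t) * erfc (b + t))
      = erfc b + Real.exp (-x) * (erf (b + x) - 1) +
        Real.exp (b + 1 / 4) * (erf (b + 1 / 2) - erf (b + x + 1 / 2)) := by
  set F : ℝ → ℝ := fun u => erfc b + Real.exp (-u) * (erf (b + u) - 1) +
      Real.exp (b + 1 / 4) * (erf (b + 1 / 2) - erf (b + u + 1 / 2)) with hF
  have hderiv : ∀ t : ℝ, HasDerivAt F (Real.exp (-t) * erfc (b + t)) t := by
    intro t
    have h1 : HasDerivAt (fun u : ℝ => Real.exp (-u)) (-Real.exp (-t)) t := by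
      simpa using (hasDerivAt_neg t).exp
    have hbt : HasDerivAt (fun u : ℝ => b + u) 1 t := (hasDerivAt_id t).const_add b
    have h2 : HasDerivAt (fun u : ℝ => erf (b + u))
        (2 / Real.sqrt π * Real.exp (-(b + t) ^ 2)) t := by
      exact ((hasDerivAt_erf (b + t)).comp t hbt).congr_deriv (by ring)
    have hbt2 : HasDerivAt (fun u : ℝ => b + u + 1 / 2) 1 t := hbt.add_const _
    have h3 : HasDerivAt (fun u : ℝ => erf (b + u + 1 / 2))
        (2 / Real.sqrt π * Real.exp (-(b + t + 1 / 2) ^ 2)) t := by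
      exact ((hasDerivAt_erf (b + t + 1 / 2)).comp t hbt2).congr_deriv (mul_one _)
    have hD : HasDerivAt F
        ((-Real.exp (-t)) * (erf (b + t) - 1) +
          Real.exp (-t) * (2 / Real.sqrt π * Real.exp (-(b + t) ^ 2)) +
          Real.exp (b + 1 / 4) *
            (0 - 2 / Real.sqrt π * Real.exp (-(b + t + 1 / 2) ^ 2))) t := by
      have := (((hasDerivAt_const t (erfc b)).add
        (h1.mul (h2.sub_const 1)))).add
        (((hasDerivAt_const t (erf (b + 1 / 2))).sub h3).const_mul (Real.exp (b + 1 / 4)))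
      exact this.congr_deriv (by ring)
    have hkey : Real.exp (b + 1 / 4) * Real.exp (-(b + t + 1 / 2) ^ 2)
        = Real.exp (-t) * Real.exp (-(b + t) ^ 2) := by
      rw [← Real.exp_add, ← Real.exp_add]; ring_nf
    convert hD using 1
    simp only [erfc]
    linear_combination (2 / Real.sqrt π) * hkey
  have hcont : Continuous fun t : ℝ => Real.exp (-t) * erfc (b + t) := by
    unfold erfc
    exact (Real.continuous_exp.comp continuous_neg).mul
      (continuous_const.sub (continuous_erf.comp (continuous_const.add continuous_id)))
  have := intervalIntegral.integral_eq_sub_of_hasDerivAt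
    (fun t _ => hderiv t) (hcont.intervalIntegrable 0 x)
  rw [this]
  simp only [hF, erfc]
  ring_nf
  simp [Real.exp_zero]
  ring
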